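/- For a positive real root α_{ij;n} of ŝl_e, there exists a partition λ with Σ_{r=1}^e b_r(λ) α_r = α_{ij;n} if and only if n > 0. -/

import Mathlib

namespace SleHat

/-- The standard basis vector `e_k` of `ℝ^{e+2}` (realized inside `ℕ → ℝ`). -/
def eVec (k : ℕ) : ℕ → ℝ := fun m => if m = k then 1 else 0

/-- The standard dot product on `ℝ^{e+2}`, pairing weights and coweights. -/
def dot (e : ℕ) (x y : ℕ → ℝ) : ℝ := ∑ k ∈ Finset.range (e + 2), x k * y k

/-- The simple roots of `ŝl_e`: `α_i = e_i − e_{i+1}` for `1 ≤ i ≤ e−1` and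
`α_e = −e_1 + e_e − e_{e+1}`. -/
def simpleRoot (e i : ℕ) : ℕ → ℝ :=
  if i = e then -eVec 1 + eVec e - eVec (e + 1) else eVec i - eVec (i + 1)

/-- The simple coroots of `ŝl_e`: `α_i^∨ = e_i − e_{i+1}` for `1 ≤ i ≤ e−1` and
`α_e^∨ = e_0 − e_1 + e_e`. -/
def simpleCoroot (e i : ℕ) : ℕ → ℝ :=
  if i = e then eVec 0 - eVec 1 + eVec e else eVec i - eVec (i + 1)

/-- The null root `δ = −e_{e+1}`. -/
def nullRoot (e : ℕ) : ℕ → ℝ := -eVec (e + 1)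

/-- `δ^∨ = e_0`. -/
def deltaVee : ℕ → ℝ := eVec 0

/-- The real roots `α_{ij;n} = e_i − e_j + nδ`. -/
def alphaIJ (e i j : ℕ) (n : ℤ) : ℕ → ℝ := eVec i - eVec j + (n : ℝ) • nullRoot e

/-- `α_{ij;n}` is a positive real root: `i ≠ j` in `{1,…,e}`, with `n ≥ 0` if `i < j` and
`n > 0` if `i > j`. -/
def IsPosRoot (e i j : ℕ) (n : ℤ) : Prop :=
  1 ≤ i ∧ i ≤ e ∧ 1 ≤ j ∧ j ≤ e ∧ i ≠ j ∧ (i < j → 0 ≤ n) ∧ (j < i → 0 < n)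

/-- `ν` is dominant: `α_i^∨ · ν ≥ 0` for all `i ∈ {1,…,e}`. -/
def Dominant (e : ℕ) (ν : ℕ → ℝ) : Prop :=
  ∀ i, 1 ≤ i → i ≤ e → 0 ≤ dot e (simpleCoroot e i) ν

/-- `ν ≤ Λ`: the difference `Λ − ν` is a `ℤ_{≥0}`-combination of the simple roots. -/
def LeRoot (e : ℕ) (ν Λ : ℕ → ℝ) : Prop :=
  ∃ c : ℕ → ℕ, Λ - ν = ∑ i ∈ Finset.Icc 1 e, (c i : ℝ) • simpleRoot e i

/-- The simple reflection `s_i(ν) = ν − (α_i^∨ · ν)·α_i`. -/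
def sAct (e i : ℕ) (ν : ℕ → ℝ) : ℕ → ℝ :=
  ν - dot e (simpleCoroot e i) ν • simpleRoot e i

/-- `ν ∈ supp(Λ)`, i.e. `wν ≤ Λ` for every element `w` of the Weyl group `W` generated by the
simple reflections `s_1, …, s_e` (each `s_i` is an involution, so the elements of `W` are
exactly the products of the generators). -/
def InSupp (e : ℕ) (Λ ν : ℕ → ℝ) : Prop :=
  ∀ L : List ℕ, (∀ i ∈ L, 1 ≤ i ∧ i ≤ e) →
    LeRoot e (L.foldr (fun i x => sAct e i x) ν) Λ

/-- The statistic `k⁺_{ij}` attached to a weight `μ` (for the highest weight `Λ`):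
`max({−1} ∪ {n : α_{ij;n} ∈ N_μ})` if `i < j` and `max({0} ∪ {n : α_{ij;n} ∈ N_μ})` if `i > j`,
where `N_μ` is the set of positive real roots `α` with `μ + α ∈ supp(Λ)`.
The statistic `k⁻_{ij}` is `k⁺_{ji}`. -/
noncomputable def kplus (e : ℕ) (Λ μ : ℕ → ℝ) (i j : ℕ) : ℤ :=
  if i < j then
    sSup ({-1} ∪ {n : ℤ | 0 ≤ n ∧ InSupp e Λ (μ + alphaIJ e i j n)})
  else
    sSup ({0} ∪ {n : ℤ | 0 < n ∧ InSupp e Λ (μ + alphaIJ e i j n)})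

/-- The orthogonal projection of `ℝ^{e+2}` onto the subspace
`𝔥* = {h : h_1 + ⋯ + h_e = 0}`. -/
noncomputable def proj (e : ℕ) (v : ℕ → ℝ) : ℕ → ℝ :=
  fun k => if 1 ≤ k ∧ k ≤ e then v k - (∑ r ∈ Finset.Icc 1 e, v r) / e else v k

/-- The fundamental weight `Λ_i`: the orthogonal projection onto `𝔥*` of
`e_0 + e_1 + ⋯ + e_i`. -/
noncomputable def fundWt (e i : ℕ) : ℕ → ℝ := proj e (∑ k ∈ Finset.range (i + 1), eVec k)

/-- A partition, encoded by its (weakly decreasing, eventually zero) sequence of parts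
`p 0 ≥ p 1 ≥ ⋯` (0-indexed rows). -/
def IsPartition (p : ℕ → ℕ) : Prop :=
  (∀ a b, a ≤ b → p b ≤ p a) ∧ ∃ M, ∀ k, M ≤ k → p k = 0

/-- `b_i(λ)`: the number of boxes of `λ` of residue `≡ i (mod e)`.  Boxes are pairs `(r, c)`
(0-indexed) with `c < p r`; the box `(r, c)` has residue `c − r (mod e)`. -/
noncomputable def resCount (e : ℕ) (p : ℕ → ℕ) (i : ℕ) : ℕ :=
  Set.ncard {rc : ℕ × ℕ | rc.2 < p rc.1 ∧
    ((rc.2 : ℤ) - (rc.1 : ℤ)) % (e : ℤ) = (i : ℤ) % (e : ℤ)}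

/-- The weight of a partition: `Λ_e − Σ_{i=1}^e b_i(λ) α_i`. -/
noncomputable def wtPartition (e : ℕ) (p : ℕ → ℕ) : ℕ → ℝ :=
  fundWt e e - ∑ i ∈ Finset.Icc 1 e, (resCount e p i : ℝ) • simpleRoot e i

end SleHat

namespace SleHat


/-! ### Auxiliary lemmas -/

lemma sum_simpleRoot_Ico (e a : ℕ) (ha : 1 ≤ a) : ∀ b, a ≤ b → b ≤ e →
    ∑ r ∈ Finset.Ico a b, simpleRoot e r = eVec a - eVec b := by
  intro b
  induction b with
  | zero => intro h1 _; exfalso; omega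
  | succ b ih =>
    intro hab hb
    rcases Nat.eq_or_lt_of_le hab with h | h
    · rw [← h, Finset.Ico_self, Finset.sum_empty, sub_self]
    · have hab' : a ≤ b := by omega
      rw [Finset.sum_Ico_succ_top hab', ih hab' (by omega)]
      rw [simpleRoot, if_neg (by omega)]
      abel

lemma sum_simpleRoot_all (e : ℕ) (he : 2 ≤ e) :
    ∑ r ∈ Finset.Icc 1 e, simpleRoot e r = nullRoot e := by
  rw [← Finset.Ico_insert_right (by omega : 1 ≤ e),
    Finset.sum_insert (by simp), sum_simpleRoot_Ico e 1 le_rfl e (by omega) le_rfl,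
    simpleRoot, if_pos rfl, nullRoot]
  abel

lemma filter_mod_range (e s t : ℕ) (ht : t < e) (hs : s ≤ e) :
    (Finset.range s).filter (fun c => c % e = t) = if t < s then {t} else ∅ := by
  ext c
  simp only [Finset.mem_filter, Finset.mem_range]
  by_cases h : t < s
  · rw [if_pos h]
    simp only [Finset.mem_singleton]
    constructor
    · rintro ⟨hc, hm⟩; rw [Nat.mod_eq_of_lt (lt_of_lt_of_le hc hs)] at hm; exact hm
    · rintro rfl; exact ⟨h, Nat.mod_eq_of_lt ht⟩
  · rw [if_neg h]
    simp only [Finset.notMem_empty, iff_false, not_and]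
    intro hc hm
    rw [Nat.mod_eq_of_lt (lt_of_lt_of_le hc hs)] at hm; omega

lemma count_row (e t : ℕ) (ht : t < e) : ∀ (q s : ℕ), s ≤ e →
    ((Finset.range (q * e + s)).filter (fun c => c % e = t)).card
      = q + (if t < s then 1 else 0) := by
  intro q
  induction q with
  | zero =>
    intro s hs
    rw [zero_mul, zero_add, filter_mod_range e s t ht hs]
    split_ifs <;> simp
  | succ q ih =>
    intro s hs
    have hre : (q + 1) * e + s = e + (q * e + s) := by ring
    rw [hre, Finset.range_add, Finset.filter_union, Finset.card_union_of_disjoint,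
      Finset.filter_map]
    · rw [Finset.card_map, filter_mod_range e e t ht le_rfl, if_pos ht]
      have : ((Finset.range (q * e + s)).filter
          ((fun c => c % e = t) ∘ ⇑(addLeftEmbedding e))).card
          = q + (if t < s then 1 else 0) := by
        rw [← ih s hs]
        congr 1
        apply Finset.filter_congr
        intro x _
        show (fun c => c % e = t) (e + x) ↔ x % e = t
        show (e + x) % e = t ↔ x % e = t
        rw [Nat.add_mod_left]
      rw [this, Finset.card_singleton]
      omega
    · refine Finset.disjoint_filter_filter ?_
      rw [Finset.disjoint_left]
      intro x hx hx2
      rw [Finset.mem_range] at hx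
      rw [Finset.mem_map] at hx2
      obtain ⟨c, _, hc⟩ := hx2
      have : e + c = x := hc
      omega

open Classical in
lemma resCount_eq_sum (e : ℕ) (p : ℕ → ℕ) (M : ℕ) (hM : ∀ k, M ≤ k → p k = 0) (i : ℕ) :
    resCount e p i = ∑ r ∈ Finset.range M,
      ((Finset.range (p r)).filter
        (fun c : ℕ => ((c : ℤ) - (r : ℤ)) % (e : ℤ) = (i : ℤ) % (e : ℤ))).card := by
  have hset : {rc : ℕ × ℕ | rc.2 < p rc.1 ∧ ((rc.2 : ℤ) - (rc.1 : ℤ)) % (e : ℤ) = (i : ℤ) % (e : ℤ)}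
      = ↑((Finset.range M).biUnion (fun r =>
          ((Finset.range (p r)).filter
            (fun c : ℕ => ((c : ℤ) - (r : ℤ)) % (e : ℤ) = (i : ℤ) % (e : ℤ))).image
            (fun c => (r, c)))) := by
    ext ⟨r, c⟩
    simp only [Set.mem_setOf_eq, Finset.coe_biUnion, Set.mem_iUnion, Finset.mem_coe,
      Finset.mem_image, Finset.mem_filter, Finset.mem_range, Prod.mk.injEq]
    constructor
    · rintro ⟨h1, h2⟩
      have hrM : r < M := by
        by_contra hr
        push_neg at hr
        rw [hM r hr] at h1; omega
      exact ⟨r, hrM, c, ⟨h1, h2⟩, rfl, rfl⟩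
    · rintro ⟨r', -, c', ⟨h1, h2⟩, rfl, rfl⟩
      exact ⟨h1, h2⟩
  rw [resCount, hset, Set.ncard_coe_finset, Finset.card_biUnion]
  · exact Finset.sum_congr rfl (fun r _ =>
      Finset.card_image_of_injective _ (fun a b hab => by simpa using hab))
  · intro a _ b _ hab
    rw [Function.onFun, Finset.disjoint_left]
    rintro x hx1 hx2
    rw [Finset.mem_image] at hx1 hx2
    obtain ⟨c1, -, rfl⟩ := hx1
    obtain ⟨c2, -, h2⟩ := hx2
    exact hab ((Prod.mk.injEq _ _ _ _).mp h2).1.symm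

lemma simpleRoot_apply (e r k : ℕ) :
    simpleRoot e r k =
      if r = e then
        (if k = 1 then (-1 : ℝ) else 0) + (if k = e then 1 else 0)
          + (if k = e + 1 then -1 else 0)
      else (if k = r then 1 else 0) + (if k = r + 1 then (-1 : ℝ) else 0) := by
  by_cases h : r = e
  · simp only [simpleRoot, if_pos h, Pi.sub_apply, Pi.add_apply, Pi.neg_apply, eVec]
    split_ifs <;> ring
  · simp only [simpleRoot, if_neg h, Pi.sub_apply, eVec]
    split_ifs <;> ring

/-- The hook partition with arm `(N-1)e + j` and leg `e - i`. -/
def hookP (e i j N : ℕ) : ℕ → ℕ :=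
  fun r => if r = 0 then (N - 1) * e + j else if r ≤ e - i then 1 else 0

lemma hookP_isPartition (e i j N : ℕ) (hj : 1 ≤ j) : IsPartition (hookP e i j N) := by
  constructor
  · intro a b hab
    unfold hookP
    split_ifs <;> omega
  · exact ⟨e + 1, fun k hk => by
      unfold hookP; rw [if_neg (by omega), if_neg (by omega)]⟩

lemma hook_resCount (e i j N r : ℕ) (he : 2 ≤ e) (hi : 1 ≤ i) (hie : i ≤ e)
    (hj : 1 ≤ j) (hje : j ≤ e) (hN : 1 ≤ N) (hr : 1 ≤ r) (hre : r ≤ e) :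
    resCount e (hookP e i j N) r
      = (N - 1) + (if r % e < j then 1 else 0) + (if i ≤ r ∧ r + 1 ≤ e then 1 else 0) := by
  classical
  rw [resCount_eq_sum e _ (e - i + 1)
    (fun k hk => by unfold hookP; rw [if_neg (by omega), if_neg (by omega)]) r]
  rw [Finset.sum_range_succ']
  have hleg : ∀ x ∈ Finset.range (e - i),
      ((Finset.range (hookP e i j N (x + 1))).filter
        (fun c : ℕ => ((c : ℤ) - ((x + 1 : ℕ) : ℤ)) % (e : ℤ) = (r : ℤ) % (e : ℤ))).card
      = if x + 1 + r = e then 1 else 0 := by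
    intro x hx
    rw [Finset.mem_range] at hx
    have hp1 : hookP e i j N (x + 1) = 1 := by
      unfold hookP; rw [if_neg (by omega), if_pos (by omega)]
    rw [hp1, show Finset.range 1 = {0} from rfl, Finset.filter_singleton]
    have key : (((0 : ℕ) : ℤ) - ((x + 1 : ℕ) : ℤ)) % (e : ℤ) = (r : ℤ) % (e : ℤ)
        ↔ x + 1 + r = e := by
      rw [Int.emod_eq_emod_iff_emod_sub_eq_zero, ← Int.dvd_iff_emod_eq_zero]
      constructor
      · intro hd
        have hd' : (e : ℤ) ∣ ((x + 1 + r : ℕ) : ℤ) := by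
          have h2 := dvd_neg.mpr hd
          have h3 : ((x + 1 + r : ℕ) : ℤ) = -(((0 : ℕ) : ℤ) - ((x + 1 : ℕ) : ℤ) - (r : ℤ)) := by
            push_cast; ring
          rw [h3]; exact h2
        rw [Int.natCast_dvd_natCast] at hd'
        exact Nat.eq_of_dvd_of_lt_two_mul (by omega) hd' (by omega)
      · intro hxe
        have : (((0 : ℕ) : ℤ) - ((x + 1 : ℕ) : ℤ) - (r : ℤ)) = -(e : ℤ) := by
          push_cast
          omega
        rw [this]
        exact dvd_neg.mpr dvd_rfl
    by_cases hc : x + 1 + r = e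
    · rw [if_pos (key.mpr hc), if_pos hc, Finset.card_singleton]
    · rw [if_neg (fun hh => hc (key.mp hh)), if_neg hc, Finset.card_empty]
  rw [Finset.sum_congr rfl hleg]
  have hrow : ((Finset.range (hookP e i j N 0)).filter
      (fun c : ℕ => ((c : ℤ) - ((0 : ℕ) : ℤ)) % (e : ℤ) = (r : ℤ) % (e : ℤ))).card
      = (N - 1) + (if r % e < j then 1 else 0) := by
    have hp0 : hookP e i j N 0 = (N - 1) * e + j := by unfold hookP; rw [if_pos rfl]
    rw [hp0]
    rw [show ((Finset.range ((N - 1) * e + j)).filter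
          (fun c : ℕ => ((c : ℤ) - ((0 : ℕ) : ℤ)) % (e : ℤ) = (r : ℤ) % (e : ℤ)))
        = (Finset.range ((N - 1) * e + j)).filter (fun c => c % e = r % e) from
      Finset.filter_congr (fun c _ => by
        rw [Nat.cast_zero, sub_zero, ← Int.natCast_mod, ← Int.natCast_mod, Nat.cast_inj])]
    exact count_row e (r % e) (Nat.mod_lt r (by omega)) (N - 1) j hje
  rw [hrow]
  by_cases hcase : i ≤ r ∧ r + 1 ≤ e
  · rw [if_pos hcase]
    have hconv : (∑ x ∈ Finset.range (e - i), if x + 1 + r = e then (1 : ℕ) else 0)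
        = ∑ x ∈ Finset.range (e - i), if x = e - 1 - r then 1 else 0 :=
      Finset.sum_congr rfl (fun x hx => by
        rw [Finset.mem_range] at hx
        exact if_congr (by omega) rfl rfl)
    rw [hconv, Finset.sum_ite_eq' (Finset.range (e - i)) (e - 1 - r) (fun _ => 1),
      if_pos (Finset.mem_range.mpr (by omega))]
    ring
  · rw [if_neg hcase]
    have hzero : (∑ x ∈ Finset.range (e - i), if x + 1 + r = e then (1 : ℕ) else 0) = 0 :=
      Finset.sum_eq_zero (fun x hx => by
        rw [Finset.mem_range] at hx
        rw [if_neg (by omega)])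
    rw [hzero]
    ring

/-- For a positive real root `α_{ij;n}` of `ŝl_e`, there is a partition `λ`
with `Σ_{r=1}^e b_r(λ) α_r = α_{ij;n}` if and only if `n > 0`. -/
theorem exists_partition_residues_eq_alphaIJ (e : ℕ) (he : 2 ≤ e)
    (i j : ℕ) (n : ℤ) (h : IsPosRoot e i j n) :
    (∃ p : ℕ → ℕ, IsPartition p ∧
        (∑ r ∈ Finset.Icc 1 e, (resCount e p r : ℝ) • simpleRoot e r) = alphaIJ e i j n) ↔
      0 < n := by
  classical
  obtain ⟨hi1, hie, hj1, hje, hij, -, -⟩ := h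
  constructor
  · rintro ⟨p, ⟨hdec, M, hM⟩, hsum⟩
    have h1 := congrFun hsum (e + 1)
    rw [Finset.sum_apply] at h1
    have hterm : ∀ r ∈ Finset.Icc 1 e, ((resCount e p r : ℝ) • simpleRoot e r) (e + 1)
        = if r = e then -(resCount e p e : ℝ) else 0 := by
      intro r hr
      rw [Finset.mem_Icc] at hr
      rw [Pi.smul_apply, simpleRoot_apply, smul_eq_mul]
      by_cases hr' : r = e
      · subst hr'
        rw [if_pos rfl, if_pos rfl, if_neg (by omega), if_neg (by omega), if_pos rfl]
        ring
      · rw [if_neg hr', if_neg hr', if_neg (by omega), if_neg (by omega)]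
        ring
    rw [Finset.sum_congr rfl hterm,
      Finset.sum_ite_eq' (Finset.Icc 1 e) e (fun _ => -(resCount e p e : ℝ)),
      if_pos (Finset.mem_Icc.mpr ⟨by omega, le_rfl⟩)] at h1
    have h2 : alphaIJ e i j n (e + 1) = -(n : ℝ) := by
      simp only [alphaIJ, Pi.add_apply, Pi.sub_apply, Pi.smul_apply, nullRoot, Pi.neg_apply,
        eVec, smul_eq_mul]
      rw [if_neg (by omega : ¬e + 1 = i), if_neg (by omega : ¬e + 1 = j)]
      norm_num
    rw [h2] at h1
    have hne : ((resCount e p e : ℕ) : ℝ) = ((n : ℤ) : ℝ) := by linarith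
    have hn0 : ((resCount e p e : ℕ) : ℤ) = n := by exact_mod_cast hne
    by_contra hlt
    have hn' : n = 0 := by omega
    have hres0 : resCount e p e = 0 := by omega
    have hp0 : p 0 = 0 := by
      by_contra hp0
      have hfin : {rc : ℕ × ℕ | rc.2 < p rc.1 ∧
          ((rc.2 : ℤ) - (rc.1 : ℤ)) % (e : ℤ) = ((e : ℕ) : ℤ) % (e : ℤ)}.Finite := by
        apply Set.Finite.subset ((Finset.range M ×ˢ Finset.range (p 0)).finite_toSet)
        rintro ⟨r, c⟩ ⟨h1', -⟩
        simp only [Finset.coe_product, Set.mem_prod, Finset.mem_coe, Finset.mem_range]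
        constructor
        · by_contra hr
          push_neg at hr
          rw [hM r hr] at h1'
          omega
        · exact lt_of_lt_of_le h1' (hdec 0 r (Nat.zero_le r))
      have hmem : ((0, 0) : ℕ × ℕ) ∈ {rc : ℕ × ℕ | rc.2 < p rc.1 ∧
          ((rc.2 : ℤ) - (rc.1 : ℤ)) % (e : ℤ) = ((e : ℕ) : ℤ) % (e : ℤ)} := by
        refine ⟨show (0 : ℕ) < p 0 by omega, ?_⟩
        simp only [Nat.cast_zero, sub_zero, Int.zero_emod, Int.emod_self]
      have hpos : 0 < resCount e p e := by
        rw [resCount]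
        exact (Set.ncard_pos hfin).mpr ⟨_, hmem⟩
      omega
    have hres : ∀ r, resCount e p r = 0 := by
      intro r
      have hempty : {rc : ℕ × ℕ | rc.2 < p rc.1 ∧
          ((rc.2 : ℤ) - (rc.1 : ℤ)) % (e : ℤ) = ((r : ℕ) : ℤ) % (e : ℤ)} = ∅ := by
        ext ⟨a, b⟩
        simp only [Set.mem_setOf_eq, Set.mem_empty_iff_false, iff_false, not_and]
        intro hb
        have := hdec 0 a (Nat.zero_le a)
        omega
      rw [resCount, hempty, Set.ncard_empty]
    have h3 := congrFun hsum i
    rw [Finset.sum_apply] at h3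
    rw [Finset.sum_eq_zero (fun r _ => by rw [hres r]; simp)] at h3
    have h4 : alphaIJ e i j n i = 1 := by
      simp only [alphaIJ, Pi.add_apply, Pi.sub_apply, Pi.smul_apply, nullRoot, Pi.neg_apply,
        eVec, smul_eq_mul]
      rw [if_neg hij, if_neg (by omega : ¬i = e + 1)]
      norm_num
    rw [h4] at h3
    norm_num at h3
  · intro hn
    have hN1 : 1 ≤ n.toNat := by omega
    refine ⟨hookP e i j n.toNat, hookP_isPartition e i j n.toNat hj1, ?_⟩
    have hres : ∀ r ∈ Finset.Icc 1 e, (resCount e (hookP e i j n.toNat) r : ℝ) • simpleRoot e r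
        = ((n.toNat - 1 : ℕ) : ℝ) • simpleRoot e r
          + ((if r < j then (1 : ℝ) else 0) • simpleRoot e r
          + ((if r = e then (1 : ℝ) else 0) • simpleRoot e r
          + (if i ≤ r ∧ r + 1 ≤ e then (1 : ℝ) else 0) • simpleRoot e r)) := by
      intro r hr
      rw [Finset.mem_Icc] at hr
      rw [hook_resCount e i j n.toNat r he hi1 hie hj1 hje hN1 hr.1 hr.2]
      have hmod : (if r % e < j then (1 : ℕ) else 0)
          = (if r < j then 1 else 0) + (if r = e then 1 else 0) := by
        by_cases h' : r = e
        · rw [h', Nat.mod_self, if_pos (show 0 < j by omega), if_neg (show ¬e < j by omega),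
            if_pos rfl]
        · rw [Nat.mod_eq_of_lt (by omega : r < e), if_neg h', add_zero]
      rw [hmod, ← add_smul, ← add_smul, ← add_smul]
      congr 1
      split_ifs <;> push_cast <;> ring
    rw [Finset.sum_congr rfl hres, Finset.sum_add_distrib, Finset.sum_add_distrib,
      Finset.sum_add_distrib, ← Finset.smul_sum, sum_simpleRoot_all e he]
    have hS2 : (∑ r ∈ Finset.Icc 1 e, (if r < j then (1 : ℝ) else 0) • simpleRoot e r)
        = eVec 1 - eVec j := by
      rw [Finset.sum_congr rfl (fun r _ => by
        rw [ite_smul, one_smul, zero_smul] :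
        ∀ r ∈ Finset.Icc 1 e, (if r < j then (1 : ℝ) else 0) • simpleRoot e r
          = if r < j then simpleRoot e r else 0)]
      rw [← Finset.sum_filter]
      have hfil : (Finset.Icc 1 e).filter (fun r => r < j) = Finset.Ico 1 j := by
        ext x
        simp only [Finset.mem_filter, Finset.mem_Icc, Finset.mem_Ico]
        omega
      rw [hfil]
      exact sum_simpleRoot_Ico e 1 le_rfl j hj1 hje
    have hS3 : (∑ r ∈ Finset.Icc 1 e, (if r = e then (1 : ℝ) else 0) • simpleRoot e r)
        = -eVec 1 + eVec e - eVec (e + 1) := by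
      rw [Finset.sum_congr rfl (fun r _ => by
        rw [ite_smul, one_smul, zero_smul] :
        ∀ r ∈ Finset.Icc 1 e, (if r = e then (1 : ℝ) else 0) • simpleRoot e r
          = if r = e then simpleRoot e r else 0)]
      rw [Finset.sum_ite_eq' (Finset.Icc 1 e) e (simpleRoot e),
        if_pos (Finset.mem_Icc.mpr ⟨by omega, le_rfl⟩), simpleRoot, if_pos rfl]
    have hS4 : (∑ r ∈ Finset.Icc 1 e, (if i ≤ r ∧ r + 1 ≤ e then (1 : ℝ) else 0) • simpleRoot e r)
        = eVec i - eVec e := by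
      rw [Finset.sum_congr rfl (fun r _ => by
        rw [ite_smul, one_smul, zero_smul] :
        ∀ r ∈ Finset.Icc 1 e, (if i ≤ r ∧ r + 1 ≤ e then (1 : ℝ) else 0) • simpleRoot e r
          = if i ≤ r ∧ r + 1 ≤ e then simpleRoot e r else 0)]
      rw [← Finset.sum_filter]
      have hfil : (Finset.Icc 1 e).filter (fun r => i ≤ r ∧ r + 1 ≤ e) = Finset.Ico i e := by
        ext x
        simp only [Finset.mem_filter, Finset.mem_Icc, Finset.mem_Ico]
        omega
      rw [hfil]
      exact sum_simpleRoot_Ico e i hi1 e hie le_rfl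
    rw [hS2, hS3, hS4]
    have hc : ((n.toNat - 1 : ℕ) : ℝ) = (n : ℝ) - 1 := by
      have h' : ((n.toNat - 1 : ℕ) : ℤ) = n - 1 := by omega
      exact_mod_cast h'
    rw [hc, alphaIJ, nullRoot]
    module


end SleHat
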